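/- Let E = [0,1] × [0,1] and define f : E → ℝ² by f(x,z) = (0,1) if x = 1/2 and f(x,z) = (x,1) otherwise. Then: (i) the function y : [0,1] → E, y(t) = (1/2, t), is the unique solution of the initial value problem y' = f(y), y(0) = (1/2, 0) on [0,1] (any differentiable z : [0,1] → E with z(0) = (1/2,0) and z'(t) = f(z(t)) for all t equals y); (ii) f is bounded and solvable; and (iii) the set of discontinuity points of f on E is exactly the line segment {(1/2, z) : z ∈ [0,1]}. -/

import Mathlib

open Set Filter Topology

noncomputable section

/-- The set of points of `A` at which the restriction `f ↾ A` (with the subspace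
topology on `A`) is discontinuous. -/
def discSet {X Y : Type*} [TopologicalSpace X] [TopologicalSpace Y]
    (f : X → Y) (A : Set X) : Set X :=
  {x | x ∈ A ∧ ¬ ContinuousWithinAt f A x}

/-- `f` is of Baire class one on `E`: it is the pointwise limit on `E` of a
sequence of functions continuous on `E`. -/
def BaireOne {X Y : Type*} [TopologicalSpace X] [TopologicalSpace Y]
    (f : X → Y) (E : Set X) : Prop :=
  ∃ g : ℕ → X → Y, (∀ n, ContinuousOn (g n) E) ∧
    ∀ x ∈ E, Tendsto (fun n => g n x) atTop (nhds (f x))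

/-- `f` is solvable on `E`: it is of Baire class one and for every closed
`K ⊆ E` the set of discontinuity points of `f ↾ K` is closed. -/
def SolvableOn {X Y : Type*} [TopologicalSpace X] [TopologicalSpace Y]
    (f : X → Y) (E : Set X) : Prop :=
  BaireOne f E ∧ ∀ K : Set X, K ⊆ E → IsClosed K → IsClosed (discSet f K)

/-- The transfinite sequence of `f`-removed sets on `E`:
`E_0 = E`, `E_{α+1} = discSet f E_α`, and `E_λ = ⋂_{β<λ} E_β` at limits. -/
def removedSets {X Y : Type*} [TopologicalSpace X] [TopologicalSpace Y]
    (f : X → Y) (E : Set X) (α : Ordinal.{0}) : Set X :=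
  Ordinal.limitRecOn α E (fun _ S => discSet f S)
    (fun o _ ih => ⋂ (β : Ordinal.{0}) (h : β < o), ih β h)

/-- `y` is differentiable on `[0,1]` with derivative `y'` (one-sided
derivatives at the endpoints). -/
def DiffOnIcc (y y' : ℝ → ℝ) : Prop :=
  ∀ x ∈ Set.Icc (0:ℝ) 1, HasDerivWithinAt y (y' x) (Set.Icc (0:ℝ) 1) x

/-- The solvable ranking: the least ordinal `α` for which the `α`-th
`y'`-removed set on `[0,1]` is empty. -/
def solvRank (y' : ℝ → ℝ) : Ordinal.{0} :=
  sInf {α : Ordinal.{0} | removedSets y' (Set.Icc (0:ℝ) 1) α = ∅}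


def E18 : Set (ℝ × ℝ) := Set.Icc (0:ℝ) 1 ×ˢ Set.Icc (0:ℝ) 1

def f18 : ℝ × ℝ → ℝ × ℝ := fun w => if w.1 = 1/2 then (0, 1) else (w.1, 1)

def y18 : ℝ → ℝ × ℝ := fun t => (1/2, t)

lemma f18_cont_of_ne {w : ℝ × ℝ} (hw : w.1 ≠ 1/2) : ContinuousAt f18 w := by
  have hopen : {p : ℝ × ℝ | p.1 ≠ 1/2} ∈ 𝓝 w :=
    (isOpen_compl_singleton.preimage continuous_fst).mem_nhds hw
  have hc : ContinuousAt (fun p : ℝ × ℝ => (p.1, (1:ℝ))) w :=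
    continuousAt_fst.prodMk continuousAt_const
  exact hc.congr (eventually_of_mem hopen fun p hp => by simp only [f18]; rw [if_neg hp])

lemma disc_char (K : Set (ℝ × ℝ)) :
    discSet f18 K = (K ∩ {w | w.1 = 1/2}) ∩ closure (K \ {w | w.1 = 1/2}) := by
  ext w
  simp only [discSet, mem_setOf_eq, mem_inter_iff, mem_diff]
  constructor
  · rintro ⟨hwK, hnc⟩
    have hhalf : w.1 = 1/2 := by
      by_contra h
      exact hnc (f18_cont_of_ne h).continuousWithinAt
    refine ⟨⟨hwK, hhalf⟩, ?_⟩
    by_contra hcl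
    apply hnc
    have hopen : (closure (K \ {w | w.1 = 1/2}))ᶜ ∈ 𝓝 w :=
      isClosed_closure.isOpen_compl.mem_nhds hcl
    have hev : ∀ᶠ p in 𝓝[K] w, f18 p = f18 w := by
      filter_upwards [nhdsWithin_le_nhds hopen, self_mem_nhdsWithin] with p hp hpK
      have : p.1 = 1/2 := by
        by_contra hne
        exact hp (subset_closure ⟨hpK, hne⟩)
      simp [f18, this, hhalf]
    exact (continuousWithinAt_const (b := f18 w)).congr_of_eventuallyEq hev rfl
  · rintro ⟨⟨hwK, hhalf⟩, hcl⟩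
    refine ⟨hwK, fun hc => ?_⟩
    have hne : (𝓝[K \ {w | w.1 = 1/2}] w).NeBot := mem_closure_iff_nhdsWithin_neBot.1 hcl
    have h1 : Tendsto f18 (𝓝[K \ {w | w.1 = 1/2}] w) (𝓝 (f18 w)) :=
      hc.mono_left (nhdsWithin_mono _ diff_subset)
    have h2 : Tendsto f18 (𝓝[K \ {w | w.1 = 1/2}] w) (𝓝 (w.1, 1)) := by
      have hg : Tendsto (fun p : ℝ × ℝ => (p.1, (1:ℝ))) (𝓝[K \ {w | w.1 = 1/2}] w)
          (𝓝 (w.1, 1)) :=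
        ((continuous_fst.prodMk continuous_const).tendsto w).mono_left nhdsWithin_le_nhds
      refine hg.congr' ?_
      filter_upwards [self_mem_nhdsWithin] with p hp
      simp only [f18]; rw [if_neg (by exact hp.2 : ¬ p.1 = 1/2)]
    have := tendsto_nhds_unique h1 h2
    rw [hhalf] at this
    simp [f18, hhalf, Prod.ext_iff] at this

lemma f18_baire : BaireOne f18 E18 := by
  refine ⟨fun n w => (w.1 * min 1 ((n:ℝ) * |w.1 - 1/2|), 1), fun n => Continuous.continuousOn (by fun_prop), ?_⟩
  intro w _
  by_cases hw : w.1 = 1/2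
  · have : (fun n : ℕ => (w.1 * min 1 ((n:ℝ) * |w.1 - 1/2|), (1:ℝ))) = fun _ => f18 w := by
      funext n; simp [f18, hw]
    rw [this]; exact tendsto_const_nhds
  · have hd : 0 < |w.1 - 1/2| := abs_pos.2 (sub_ne_zero.2 hw)
    refine Tendsto.congr' ?_ (tendsto_const_nhds (x := f18 w))
    rw [EventuallyEq, eventually_atTop]
    refine ⟨⌈1/|w.1 - 1/2|⌉₊, fun n hn => ?_⟩
    have h1 : 1/|w.1 - 1/2| ≤ (n:ℝ) := le_trans (Nat.le_ceil _) (Nat.cast_le.2 hn)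
    have h2 : (1:ℝ) ≤ (n:ℝ) * |w.1 - 1/2| := by
      rwa [div_le_iff₀ hd] at h1
    simp only [f18, if_neg hw, min_eq_left h2, mul_one]

lemma disc_closed (K : Set (ℝ × ℝ)) (hK : IsClosed K) : IsClosed (discSet f18 K) := by
  rw [disc_char]
  exact ((hK.inter (isClosed_singleton.preimage continuous_fst)).inter isClosed_closure)

lemma f18_bdd : ∀ w ∈ E18, ‖f18 w‖ ≤ 1 := by
  rintro ⟨a, b⟩ ⟨ha, hb⟩
  simp only [f18, Prod.norm_def]
  split_ifs with h
  · simp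
  · simp only [sup_le_iff]
    constructor
    · rw [Real.norm_eq_abs, abs_le]; exact ⟨by linarith [ha.1], ha.2⟩
    · simp

lemma disc_E18 : discSet f18 E18 = ({(1/2 : ℝ)} ×ˢ Set.Icc (0:ℝ) 1 : Set (ℝ × ℝ)) := by
  rw [disc_char]
  ext ⟨a, b⟩
  simp only [mem_inter_iff, mem_prod, mem_singleton_iff, mem_setOf_eq, E18, mem_Icc, Set.mem_Icc]
  constructor
  · rintro ⟨⟨⟨ha, hb⟩, h2⟩, _⟩
    exact ⟨h2.symm ▸ rfl, hb⟩
  · rintro ⟨ha, hb⟩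
    subst ha
    refine ⟨⟨⟨⟨by norm_num, by norm_num⟩, hb⟩, rfl⟩, ?_⟩
    have : Tendsto (fun n : ℕ => ((1/2 + 1/(2*((n:ℝ)+1)) : ℝ), b)) atTop (𝓝 (1/2, b)) := by
      refine Tendsto.prodMk_nhds ?_ tendsto_const_nhds
      have h0 : Tendsto (fun n : ℕ => 1/(2*((n:ℝ)+1))) atTop (𝓝 0) := by
        have := tendsto_one_div_add_atTop_nhds_zero_nat (𝕜 := ℝ)
        have h2 : Tendsto (fun n : ℕ => (1/((n:ℝ)+1)) * (1/2)) atTop (𝓝 (0 * (1/2))) :=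
          this.mul_const _
        simpa [div_mul_div_comm, mul_comm] using h2
      have := h0.const_add (1/2 : ℝ)
      simpa using this
    refine mem_closure_of_tendsto this ?_
    refine Eventually.of_forall fun n => ?_
    have hpos : (0:ℝ) < 1/(2*((n:ℝ)+1)) := by positivity
    have hle : 1/(2*((n:ℝ)+1)) ≤ 1/2 := by
      apply one_div_le_one_div_of_le <;> nlinarith [Nat.cast_nonneg (α := ℝ) n]
    constructor
    · exact ⟨⟨by linarith, by linarith⟩, hb⟩
    · simp only [mem_setOf_eq]; intro h; linarith [h]

lemma fstD {z : ℝ → ℝ × ℝ} {d : ℝ × ℝ} {s : Set ℝ} {x : ℝ} (h : HasDerivWithinAt z d s x) :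
    HasDerivWithinAt (fun t => (z t).1) d.1 s x :=
  (ContinuousLinearMap.fst ℝ ℝ ℝ).hasFDerivAt.comp_hasDerivWithinAt x h

lemma sndD {z : ℝ → ℝ × ℝ} {d : ℝ × ℝ} {s : Set ℝ} {x : ℝ} (h : HasDerivWithinAt z d s x) :
    HasDerivWithinAt (fun t => (z t).2) d.2 s x :=
  (ContinuousLinearMap.snd ℝ ℝ ℝ).hasFDerivAt.comp_hasDerivWithinAt x h

lemma uniq18 (z : ℝ → ℝ × ℝ) (hmem : ∀ t ∈ Set.Icc (0:ℝ) 1, z t ∈ E18)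
    (h0 : z 0 = (1/2, 0))
    (hz : ∀ t ∈ Set.Icc (0:ℝ) 1, HasDerivWithinAt z (f18 (z t)) (Set.Icc (0:ℝ) 1) t) :
    ∀ t ∈ Set.Icc (0:ℝ) 1, z t = y18 t := by
  have hzc : ContinuousOn z (Icc (0:ℝ) 1) := fun t ht => (hz t ht).continuousWithinAt
  set x : ℝ → ℝ := fun t => (z t).1 with hxdef
  have hxc : ContinuousOn x (Icc (0:ℝ) 1) := continuous_fst.comp_continuousOn hzc
  have hx0 : x 0 = 1/2 := by simp [hxdef, h0]
  have hxd : ∀ t ∈ Icc (0:ℝ) 1, HasDerivWithinAt x ((f18 (z t)).1) (Icc (0:ℝ) 1) t :=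
    fun t ht => fstD (hz t ht)
  -- Step 1: the first coordinate is constant ≡ 1/2
  have hxhalf : ∀ t ∈ Icc (0:ℝ) 1, x t = 1/2 := by
    by_contra hcon
    push_neg at hcon
    obtain ⟨t0, ht0, hne⟩ := hcon
    have ht0pos : 0 < t0 := by
      rcases lt_or_eq_of_le ht0.1 with h | h
      · exact h
      · exact absurd (h ▸ hx0) hne
    have ht01 : t0 ≤ 1 := ht0.2
    set S : Set ℝ := Icc 0 t0 ∩ x ⁻¹' {1/2} with hSdef
    have hS0 : (0:ℝ) ∈ S := ⟨⟨le_refl 0, ht0pos.le⟩, hx0⟩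
    have hScl : IsClosed S :=
      ContinuousOn.preimage_isClosed_of_isClosed
        (hxc.mono (Icc_subset_Icc le_rfl ht01)) isClosed_Icc isClosed_singleton
    have hScpt : IsCompact S := isCompact_Icc.of_isClosed_subset hScl inter_subset_left
    set a : ℝ := sSup S with hadef
    have haS : a ∈ S := hScpt.sSup_mem ⟨0, hS0⟩
    have hxa : x a = 1/2 := haS.2
    have ha0 : 0 ≤ a := haS.1.1
    have hat0 : a < t0 := lt_of_le_of_ne haS.1.2 (fun h => hne (h ▸ hxa))
    have ha1 : a ≤ 1 := le_trans hat0.le ht01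
    have hgt : ∀ t, a < t → t ≤ t0 → x t ≠ 1/2 := by
      intro t h1 h2 h3
      exact absurd (le_csSup hScpt.bddAbove ⟨⟨le_trans ha0 h1.le, h2⟩, h3⟩) (not_le.2 h1)
    -- on (a, t0) the ODE is x' = x
    have hode : ∀ t ∈ Ioo a t0, HasDerivAt x (x t) t := by
      intro t ht
      have htI : t ∈ Icc (0:ℝ) 1 := ⟨le_trans ha0 ht.1.le, le_trans ht.2.le ht01⟩
      have hne' : x t ≠ 1/2 := hgt t ht.1 ht.2.le
      have hder := hxd t htI
      have hval : (f18 (z t)).1 = x t := by simp only [f18]; rw [if_neg hne']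
      rw [hval] at hder
      exact hder.hasDerivAt
        (Icc_mem_nhds (lt_of_le_of_lt ha0 ht.1) (lt_of_lt_of_le ht.2 ht01))
    set u : ℝ → ℝ := fun t => x t * Real.exp (-t) with hudef
    have huc : ContinuousOn u (Icc (0:ℝ) 1) :=
      hxc.mul ((Real.continuous_exp.comp continuous_neg).continuousOn)
    have hud : ∀ t ∈ Ioo a t0, HasDerivAt u 0 t := by
      intro t ht
      have hexp : HasDerivAt (fun s : ℝ => Real.exp (-s)) (Real.exp (-t) * (-1)) t :=
        (Real.hasDerivAt_exp (-t)).comp t (hasDerivAt_neg t)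
      have h1 := (hode t ht).mul hexp
      rw [show (0:ℝ) = x t * Real.exp (-t) + x t * (Real.exp (-t) * (-1)) by ring]
      exact h1
    have hconst : ∀ s ∈ Ioc a t0, u s = u t0 := by
      intro s hs
      have hsub : Icc s t0 ⊆ Icc (0:ℝ) 1 :=
        Icc_subset_Icc (le_trans ha0 hs.1.le) ht01
      have hcont : ContinuousOn u (Icc s t0) := huc.mono hsub
      have hkey := constant_of_has_deriv_right_zero hcont
        (fun r hr => (hud r ⟨lt_of_lt_of_le hs.1 hr.1, hr.2⟩).hasDerivWithinAt)
      exact (hkey t0 ⟨hs.2, le_refl _⟩).symm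
    have hua : u a = u t0 := by
      have hcu : Tendsto u (𝓝[Ioc a t0] a) (𝓝 (u a)) :=
        (huc.continuousWithinAt ⟨ha0, ha1⟩).mono
          (fun r hr => ⟨le_trans ha0 hr.1.le, le_trans hr.2 ht01⟩)
      have h2 : Tendsto u (𝓝[Ioc a t0] a) (𝓝 (u t0)) := by
        refine tendsto_const_nhds.congr' ?_
        filter_upwards [self_mem_nhdsWithin] with s hs
        exact (hconst s hs).symm
      haveI : (𝓝[Ioc a t0] a).NeBot := by
        rw [nhdsWithin_Ioc_eq_nhdsGT hat0]
        infer_instance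
      exact tendsto_nhds_unique hcu h2
    have hxform : ∀ t ∈ Icc a t0, x t = 1/2 * Real.exp (t - a) := by
      intro t ht
      have hut : u t = u a := by
        rcases eq_or_lt_of_le ht.1 with h | h
        · rw [← h]
        · exact (hconst t ⟨h, ht.2⟩).trans hua.symm
      have h1 : x t * Real.exp (-t) = (1/2) * Real.exp (-a) := by
        have := hut
        simp only [hudef] at this
        rw [hxa] at this
        exact this
      have h2 := congrArg (fun r => r * Real.exp t) h1
      simp only [mul_assoc, ← Real.exp_add] at h2
      rw [neg_add_cancel, Real.exp_zero, mul_one] at h2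
      rw [h2, sub_eq_neg_add]
    -- derivative contradiction at a
    have hd0 : HasDerivWithinAt x 0 (Icc a t0) a := by
      have hder := hxd a ⟨ha0, ha1⟩
      have hval : (f18 (z a)).1 = 0 := by
        simp only [f18]
        rw [if_pos]
        exact hxa
      rw [hval] at hder
      exact hder.mono (Icc_subset_Icc ha0 ht01)
    have hdw : HasDerivWithinAt (fun t => 1/2 * Real.exp (t - a)) (1/2) (Icc a t0) a := by
      have hsub : HasDerivAt (fun t : ℝ => t - a) 1 a := (hasDerivAt_id a).sub_const a
      have hexp : HasDerivAt (fun t : ℝ => Real.exp (t - a)) (Real.exp (a - a) * 1) a :=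
        hsub.exp
      have h : HasDerivAt (fun t : ℝ => 1/2 * Real.exp (t - a))
          (1/2 * (Real.exp (a - a) * 1)) a := hexp.const_mul (1/2)
      have h' : HasDerivAt (fun t : ℝ => 1/2 * Real.exp (t - a)) (1/2) a := by
        convert h using 1
        rw [sub_self, Real.exp_zero]
        ring
      exact h'.hasDerivWithinAt
    have hd2 : HasDerivWithinAt x (1/2) (Icc a t0) a :=
      hdw.congr (fun y hy => hxform y hy) (hxform a ⟨le_refl a, hat0.le⟩)
    have hu := (uniqueDiffOn_Icc hat0) a ⟨le_refl a, hat0.le⟩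
    have e1 := hd0.derivWithin hu
    have e2 := hd2.derivWithin hu
    rw [e1] at e2
    norm_num at e2
  -- Step 2: second coordinate
  set v : ℝ → ℝ := fun t => (z t).2 with hvdef
  have hvd : ∀ t ∈ Icc (0:ℝ) 1, HasDerivWithinAt v 1 (Icc (0:ℝ) 1) t := by
    intro t ht
    have hder := sndD (hz t ht)
    have hval : (f18 (z t)).2 = 1 := by
      simp only [f18]
      split_ifs <;> rfl
    rwa [hval] at hder
  have hgd : ∀ t ∈ Icc (0:ℝ) 1, HasDerivWithinAt (fun t => v t - t) 0 (Icc (0:ℝ) 1) t := by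
    intro t ht
    have := (hvd t ht).sub (hasDerivWithinAt_id t (Icc (0:ℝ) 1))
    rw [sub_self] at this
    exact this
  have hgc : ContinuousOn (fun t => v t - t) (Icc (0:ℝ) 1) :=
    fun t ht => (hgd t ht).continuousWithinAt
  have hvt : ∀ t ∈ Icc (0:ℝ) 1, v t = t := by
    have hkey := constant_of_has_deriv_right_zero hgc
      (fun r hr => (hgd r ⟨hr.1, hr.2.le⟩).mono_of_mem_nhdsWithin (Icc_mem_nhdsGE_of_mem hr))
    intro t ht
    have := hkey t ht
    have hv0 : v 0 = 0 := by simp [hvdef, h0]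
    rw [hv0] at this
    linarith [this]
  intro t ht
  have h1 : (z t).1 = 1/2 := hxhalf t ht
  have h2 : (z t).2 = t := hvt t ht
  simp only [y18]
  exact Prod.ext h1 h2

theorem statement18 :
    ((∀ t ∈ Set.Icc (0:ℝ) 1, y18 t ∈ E18) ∧
      y18 0 = (1/2, 0) ∧
      (∀ t ∈ Set.Icc (0:ℝ) 1, HasDerivWithinAt y18 (f18 (y18 t)) (Set.Icc (0:ℝ) 1) t) ∧
      (∀ z : ℝ → ℝ × ℝ, (∀ t ∈ Set.Icc (0:ℝ) 1, z t ∈ E18) →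
        z 0 = (1/2, 0) →
        (∀ t ∈ Set.Icc (0:ℝ) 1, HasDerivWithinAt z (f18 (z t)) (Set.Icc (0:ℝ) 1) t) →
        ∀ t ∈ Set.Icc (0:ℝ) 1, z t = y18 t)) ∧
    ((∃ M : ℝ, ∀ w ∈ E18, ‖f18 w‖ ≤ M) ∧ SolvableOn f18 E18) ∧
    discSet f18 E18 = ({(1/2 : ℝ)} ×ˢ Set.Icc (0:ℝ) 1 : Set (ℝ × ℝ)) := by
  refine ⟨⟨?_, rfl, ?_, uniq18⟩, ⟨⟨1, f18_bdd⟩, f18_baire, fun K _ hK => disc_closed K hK⟩,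
    disc_E18⟩
  · intro t ht
    refine ⟨⟨?_, ?_⟩, ht⟩ <;> · simp only [y18]; norm_num
  · intro t ht
    have h : f18 (y18 t) = (0, 1) := by
      simp [f18, y18]
    rw [h]
    exact (hasDerivWithinAt_const t _ ((1:ℝ)/2)).prodMk (hasDerivWithinAt_id t _)

end
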